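/- Let A be a C*-algebra, H₁ and H₂ Hilbert A-modules, and s ∈ L(H₁, H₂) an adjointable bounded module map which is surjective. Then there exists an adjointable module map ψ ∈ L(H₂, H₁) with s ∘ ψ = id_{H₂}; moreover ψ(H₂) is an orthogonal direct summand of H₁ and is unitarily equivalent to H₂. Consequently every Hilbert A-module is projective in the category of Hilbert A-modules with adjointable maps as morphisms. -/

import Mathlib

open scoped RightActions

noncomputable section

/-- The December 2024 Mathlib `CStarModule` (right Hilbert `A`-module, action by `Aᵐᵒᵖ`),
restated verbatim since Mathlib's `CStarModule` now uses left modules. -/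
class RightCStarModule (A E : Type*) [NonUnitalSemiring A] [StarRing A] [Module ℂ A]
    [AddCommGroup E] [Module ℂ E] [PartialOrder A] [SMul Aᵐᵒᵖ E] [Norm A] [Norm E]
    extends Inner A E where
  inner_add_right {x} {y} {z} : inner x (y + z) = inner x y + inner x z
  inner_self_nonneg {x} : 0 ≤ inner x x
  inner_self {x} : inner x x = 0 ↔ x = 0
  inner_op_smul_right {a : A} {x y : E} : inner x (y <• a) = inner x y * a
  inner_smul_right_complex {z : ℂ} {x} {y} : inner x (z • y) = z • inner x y
  star_inner x y : star (inner x y) = inner y x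
  norm_eq_sqrt_norm_inner_self x : ‖x‖ = √‖inner x x‖

/-- A bounded `A`-module map between Hilbert `A`-modules. -/
def IsModuleMap (A : Type*) {E F : Type*} [NonUnitalCStarAlgebra A]
    [NormedAddCommGroup E] [Module ℂ E] [SMul Aᵐᵒᵖ E]
    [NormedAddCommGroup F] [Module ℂ F] [SMul Aᵐᵒᵖ F] (T : E →L[ℂ] F) : Prop :=
  ∀ (x : E) (a : A), T (x <• a) = T x <• a

/-- `S : E → F` and `S' : F → E` are mutually adjoint module maps:
`⟪S x, y⟫ = ⟪x, S' y⟫` for all `x, y`. -/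
def IsAdjointPair (A : Type*) {E F : Type*} [NonUnitalCStarAlgebra A] [PartialOrder A]
    [StarOrderedRing A]
    [NormedAddCommGroup E] [NormedSpace ℂ E] [SMul Aᵐᵒᵖ E] [RightCStarModule A E]
    [NormedAddCommGroup F] [NormedSpace ℂ F] [SMul Aᵐᵒᵖ F] [RightCStarModule A F]
    (S : E →L[ℂ] F) (S' : F →L[ℂ] E) : Prop :=
  ∀ (x : E) (y : F), inner A (S x) y = inner A x (S' y)


attribute [simp] RightCStarModule.inner_add_right RightCStarModule.star_inner
  RightCStarModule.inner_op_smul_right RightCStarModule.inner_smul_right_complex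

namespace RightCStarModule

section general

variable {A E : Type*} [NonUnitalRing A] [StarRing A] [AddCommGroup E] [Module ℂ A]
  [Module ℂ E] [PartialOrder A] [SMul Aᵐᵒᵖ E] [Norm A] [Norm E] [RightCStarModule A E]

@[simp]
lemma inner_add_left {x y z : E} : inner A (x + y) z = inner A x z + inner A y z := by
  rw [← star_star (r := inner A (x + y) z)]
  simp only [RightCStarModule.inner_add_right, star_add, RightCStarModule.star_inner]

@[simp]
lemma inner_op_smul_left {a : A} {x y : E} : inner A (x <• a) y = star a * inner A x y := by
  rw [← RightCStarModule.star_inner]; simp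

@[simp]
lemma inner_zero_right {x : E} : inner A x 0 = 0 := by
  simpa using RightCStarModule.inner_smul_right_complex (A := A) (z := 0) (x := x) (y := x)

@[simp]
lemma inner_neg_right {x y : E} : inner A x (-y) = -inner A x y := by
  simpa using RightCStarModule.inner_smul_right_complex (A := A) (z := -1) (x := x) (y := y)

@[simp]
lemma inner_sub_right {x y z : E} : inner A x (y - z) = inner A x y - inner A x z := by
  rw [sub_eq_add_neg, RightCStarModule.inner_add_right, inner_neg_right, ← sub_eq_add_neg]

section StarModule

variable [StarModule ℂ A]

@[simp]
lemma inner_smul_left_complex {z : ℂ} {x y : E} : inner A (z • x) y = star z • inner A x y := by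
  rw [← RightCStarModule.star_inner]
  simp

@[simp]
lemma inner_smul_left_real {z : ℝ} {x y : E} : inner A (z • x) y = z • inner A x y := by
  have h₁ : z • x = (z : ℂ) • x := by simp
  rw [h₁, ← RightCStarModule.star_inner, RightCStarModule.inner_smul_right_complex]
  simp

@[simp]
lemma inner_smul_right_real {z : ℝ} {x y : E} : inner A x (z • y) = z • inner A x y := by
  have h₁ : z • y = (z : ℂ) • y := by simp
  rw [h₁, ← RightCStarModule.star_inner, inner_smul_left_complex]
  simp

@[simp]
lemma inner_zero_left {x : E} : inner A 0 x = 0 := by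
  simpa using inner_smul_left_complex (A := A) (z := 0) (x := x) (y := x)

@[simp]
lemma inner_neg_left {x y : E} : inner A (-x) y = -inner A x y := by
  simpa using inner_smul_left_complex (A := A) (z := -1) (x := x) (y := y)

@[simp]
lemma inner_sub_left {x y z : E} : inner A (x - y) z = inner A x z - inner A y z := by
  rw [sub_eq_add_neg, inner_add_left, inner_neg_left, ← sub_eq_add_neg]

end StarModule

end general

section norm

variable {A E : Type*} [NonUnitalCStarAlgebra A] [PartialOrder A] [AddCommGroup E]
  [Module ℂ E] [SMul Aᵐᵒᵖ E] [Norm E] [RightCStarModule A E]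

variable (A) in
lemma norm_sq_eq {x : E} : ‖x‖ ^ 2 = ‖inner A x x‖ := by
  simp [RightCStarModule.norm_eq_sqrt_norm_inner_self (A := A)]

protected lemma norm_nonneg (A : Type*) {E : Type*} [NonUnitalCStarAlgebra A] [PartialOrder A]
    [AddCommGroup E] [Module ℂ E] [SMul Aᵐᵒᵖ E] [Norm E] [RightCStarModule A E]
    {x : E} : 0 ≤ ‖x‖ := by
  simp [RightCStarModule.norm_eq_sqrt_norm_inner_self (A := A)]

protected lemma norm_pos (A : Type*) {E : Type*} [NonUnitalCStarAlgebra A] [PartialOrder A]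
    [AddCommGroup E] [Module ℂ E] [SMul Aᵐᵒᵖ E] [Norm E] [RightCStarModule A E]
    {x : E} (hx : x ≠ 0) : 0 < ‖x‖ := by
  simp only [RightCStarModule.norm_eq_sqrt_norm_inner_self (A := A), Real.sqrt_pos, norm_pos_iff]
  intro H
  rw [RightCStarModule.inner_self] at H
  exact hx H

variable [StarOrderedRing A]

lemma inner_mul_inner_swap_le {x y : E} :
    inner A y x * inner A x y ≤ ‖x‖ ^ 2 • inner A y y := by
  rcases eq_or_ne x 0 with h | h
  · subst h
    simp only [inner_zero_left, inner_zero_right, mul_zero, zero_mul]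
    exact smul_nonneg (sq_nonneg _) RightCStarModule.inner_self_nonneg
  · have h₁ : ∀ a : A,
        (0 : A) ≤ ‖x‖ ^ 2 • (star a * a) - ‖x‖ ^ 2 • (star a * inner A x y)
          - ‖x‖ ^ 2 • (inner A y x * a) + ‖x‖ ^ 2 • (‖x‖ ^ 2 • inner A y y) := fun a => by
      calc (0 : A) ≤ inner A (x <• a - ‖x‖ ^ 2 • y) (x <• a - ‖x‖ ^ 2 • y) :=
              RightCStarModule.inner_self_nonneg
        _ = star a * inner A x x * a - ‖x‖ ^ 2 • (star a * inner A x y)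
              - ‖x‖ ^ 2 • (inner A y x * a) + ‖x‖ ^ 2 • (‖x‖ ^ 2 • inner A y y) := by
            simp only [inner_sub_right, RightCStarModule.inner_op_smul_right, inner_sub_left,
              inner_op_smul_left, inner_smul_left_real, smul_mul_assoc, sub_mul, smul_sub,
              inner_smul_right_real, mul_assoc]
            abel
        _ ≤ ‖x‖ ^ 2 • (star a * a) - ‖x‖ ^ 2 • (star a * inner A x y)
              - ‖x‖ ^ 2 • (inner A y x * a) + ‖x‖ ^ 2 • (‖x‖ ^ 2 • inner A y y) := by
            gcongr
            calc _ ≤ ‖inner A x x‖ • (star a * a) :=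
                  CStarAlgebra.star_left_conjugate_le_norm_smul
                    (hb := RightCStarModule.star_inner x x)
              _ = (√‖inner A x x‖) ^ 2 • (star a * a) := by
                  rw [Real.sq_sqrt]
                  positivity
              _ = ‖x‖ ^ 2 • (star a * a) := by
                  rw [← RightCStarModule.norm_eq_sqrt_norm_inner_self]
    specialize h₁ (inner A x y)
    simp only [RightCStarModule.star_inner, sub_self, zero_sub, le_neg_add_iff_add_le,
      add_zero] at h₁
    rwa [smul_le_smul_iff_of_pos_left (pow_pos (RightCStarModule.norm_pos A h) _)] at h₁

variable (E) in
lemma norm_inner_le {x y : E} : ‖inner A x y‖ ≤ ‖x‖ * ‖y‖ := by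
  have := calc ‖inner A x y‖ ^ 2 = ‖inner A y x * inner A x y‖ := by
                rw [← RightCStarModule.star_inner x, CStarRing.norm_star_mul_self, pow_two]
    _ ≤ ‖‖x‖ ^ 2 • inner A y y‖ := by
                refine CStarAlgebra.norm_le_norm_of_nonneg_of_le ?_ inner_mul_inner_swap_le
                rw [← RightCStarModule.star_inner x]
                exact star_mul_self_nonneg (inner A x y)
    _ = ‖x‖ ^ 2 * ‖inner A y y‖ := by simp [norm_smul]
    _ = ‖x‖ ^ 2 * ‖y‖ ^ 2 := by
                simp only [RightCStarModule.norm_eq_sqrt_norm_inner_self (A := A), norm_nonneg,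
                  Real.sq_sqrt]
    _ = (‖x‖ * ‖y‖) ^ 2 := by simp only [mul_pow]
  refine (pow_le_pow_iff_left₀ (norm_nonneg (inner A x y)) ?_ (by simp)).mp this
  exact mul_nonneg (RightCStarModule.norm_nonneg A) (RightCStarModule.norm_nonneg A)

end norm

end RightCStarModule

open scoped ENNReal NNReal

set_option linter.unusedSectionVars false
set_option linter.unusedVariables false
set_option maxHeartbeats 1000000

namespace LanceAux

/-- Coefficients of the power series of `√(1-t)`. -/
def sqrtCoeff : ℕ → ℝ
  | 0 => 1
  | (n+1) => -((catalan n : ℝ) / 2 ^ (2*n+1))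

lemma catalan_le_four_pow (n : ℕ) : catalan n ≤ 4 ^ n := by
  have h1 : catalan n ≤ n.centralBinom := by
    rw [catalan_eq_centralBinom_div]; exact Nat.div_le_self _ _
  refine h1.trans ?_
  have h2 : (2*n).choose n ≤ ∑ i ∈ Finset.range (2*n+1), (2*n).choose i :=
    Finset.single_le_sum (fun i _ => Nat.zero_le _) (Finset.mem_range.mpr (by omega))
  rw [Nat.sum_range_choose] at h2
  calc n.centralBinom = (2*n).choose n := rfl
    _ ≤ 2 ^ (2*n) := h2
    _ = 4 ^ n := by rw [pow_mul]; norm_num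

lemma abs_sqrtCoeff_le (n : ℕ) : |sqrtCoeff n| ≤ 1 := by
  cases n with
  | zero => simp [sqrtCoeff]
  | succ n =>
    have h4 : (catalan n : ℝ) ≤ 4 ^ n := by exact_mod_cast catalan_le_four_pow n
    have hp : (0:ℝ) < 2 ^ (2*n+1) := by positivity
    have h42 : (4:ℝ) ^ n ≤ 2 ^ (2*n+1) := by
      have hh : (2:ℝ)^(2*n) = 4^n := by rw [pow_mul]; norm_num
      rw [pow_succ, hh]
      nlinarith [pow_pos (by norm_num : (0:ℝ) < 4) n]
    have hnn : (0:ℝ) ≤ (catalan n : ℝ) / 2 ^ (2*n+1) := by positivity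
    rw [sqrtCoeff, abs_neg, abs_of_nonneg hnn, div_le_one hp]
    exact h4.trans h42

lemma sqrtCoeff_conv (k : ℕ) :
    ∑ ij ∈ Finset.HasAntidiagonal.antidiagonal k, sqrtCoeff ij.1 * sqrtCoeff ij.2
      = if k = 0 then 1 else if k = 1 then -1 else 0 := by
  match k with
  | 0 => simp [sqrtCoeff]
  | 1 =>
    rw [Finset.Nat.sum_antidiagonal_succ]
    simp [sqrtCoeff]
    norm_num
  | (n+2) =>
    rw [Finset.Nat.sum_antidiagonal_succ, Finset.Nat.sum_antidiagonal_succ']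
    have hinner : ∑ p ∈ Finset.HasAntidiagonal.antidiagonal n, sqrtCoeff (p.1+1) * sqrtCoeff (p.2+1)
        = (catalan (n+1) : ℝ) / 2 ^ (2*n+2) := by
      rw [catalan_succ', Nat.cast_sum, Finset.sum_div]
      refine Finset.sum_congr rfl fun p hp => ?_
      have hpn : p.1 + p.2 = n := Finset.HasAntidiagonal.mem_antidiagonal.mp hp
      rw [sqrtCoeff, sqrtCoeff, neg_mul_neg, div_mul_div_comm, ← pow_add, Nat.cast_mul]
      congr 2
      omega
    have e0 : sqrtCoeff 0 = 1 := rfl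
    have e2 : sqrtCoeff (n+2) = -((catalan (n+1) : ℝ) / 2 ^ (2*n+3)) := by
      have h : 2*(n+1)+1 = 2*n+3 := by omega
      show sqrtCoeff ((n+1)+1) = _
      rw [sqrtCoeff, h]
    rw [hinner, e0, e2]
    have h23 : (2:ℝ) ^ (2*n+3) = 2 * 2 ^ (2*n+2) := by rw [pow_succ]; ring
    have hp : (0:ℝ) < 2 ^ (2*n+2) := by positivity
    simp only [if_neg (by omega : ¬ n+2 = 0), if_neg (by omega : ¬ n+2 = 1)]
    field_simp [h23]
    ring


variable {A : Type*} [NonUnitalCStarAlgebra A] [PartialOrder A] [StarOrderedRing A]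

section Basic
variable {E : Type*} [NormedAddCommGroup E] [NormedSpace ℂ E] [SMul Aᵐᵒᵖ E] [RightCStarModule A E]

local notation "⟪" x ", " y "⟫" => (inner A x y : A)

lemma eq_of_inner_right {u v : E} (h : ∀ w : E, ⟪w, u⟫ = ⟪w, v⟫) : u = v := by
  have h2 : ⟪u - v, u - v⟫ = 0 := by
    rw [RightCStarModule.inner_sub_right, h, sub_self]
  exact sub_eq_zero.mp (RightCStarModule.inner_self.mp h2)

lemma op_smul_add (a : A) (u v : E) : (u + v) <• a = u <• a + v <• a := by
  refine eq_of_inner_right (A := A) fun w => ?_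
  simp [mul_comm, add_mul]

lemma op_smul_csmul (z : ℂ) (a : A) (u : E) : (z • u) <• a = z • (u <• a) := by
  refine eq_of_inner_right (A := A) fun w => ?_
  simp [smul_mul_assoc]

lemma op_smul_sub (a : A) (u v : E) : (u - v) <• a = u <• a - v <• a := by
  refine eq_of_inner_right (A := A) fun w => ?_
  simp [sub_mul]

lemma norm_op_smul_le (a : A) (u : E) : ‖u <• a‖ ≤ ‖u‖ * ‖a‖ := by
  have h2 : ‖u <• a‖ ^ 2 ≤ (‖u‖ * ‖a‖) ^ 2 := by
    rw [RightCStarModule.norm_sq_eq A]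
    have h3 : ⟪u <• a, u <• a⟫ = star a * ⟪u, u⟫ * a := by simp [mul_assoc]
    rw [h3, mul_assoc]
    calc ‖star a * (⟪u, u⟫ * a)‖ ≤ ‖star a‖ * ‖⟪u, u⟫ * a‖ := norm_mul_le _ _
      _ ≤ ‖star a‖ * (‖⟪u, u⟫‖ * ‖a‖) := by
          gcongr; exact norm_mul_le _ _
      _ = ‖a‖ * (‖u‖ ^ 2 * ‖a‖) := by rw [norm_star, ← RightCStarModule.norm_sq_eq A]
      _ = (‖u‖ * ‖a‖) ^ 2 := by ring
  exact (pow_le_pow_iff_left₀ (norm_nonneg _) (by positivity) (two_ne_zero)).mp h2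

variable (A) in
/-- Right multiplication by `a : A` as a continuous linear map. -/
def rmul (a : A) : E →L[ℂ] E :=
  LinearMap.mkContinuous
    { toFun := fun u => u <• a
      map_add' := op_smul_add a
      map_smul' := fun z u => op_smul_csmul z a u } ‖a‖
    (fun u => by rw [mul_comm]; exact norm_op_smul_le a u)

@[simp] lemma rmul_apply (a : A) (u : E) : rmul A a u = u <• a := rfl

/-- The inner A product with a fixed left argument, as a continuous linear map. -/
def innerRight (v : E) : E →L[ℂ] A :=
  LinearMap.mkContinuous
    { toFun := fun w => ⟪v, w⟫
      map_add' := fun w₁ w₂ => RightCStarModule.inner_add_right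
      map_smul' := fun z w => RightCStarModule.inner_smul_right_complex } ‖v‖
    (fun w => RightCStarModule.norm_inner_le E)

@[simp] lemma innerRight_apply (v w : E) : innerRight (A := A) v w = ⟪v, w⟫ := rfl

end Basic

section Tsum
variable {F : Type*} [NormedAddCommGroup F] [NormedSpace ℂ F] [SMul Aᵐᵒᵖ F] [RightCStarModule A F]
  [CompleteSpace F]

local notation "⟪" x ", " y "⟫" => (inner A x y : A)

lemma tsum_props (a : ℕ → (F →L[ℂ] F)) (hs : Summable a)
    (h1 : ∀ n, ∀ (u : F) (b : A), a n (u <• b) = a n u <• b)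
    (h2 : ∀ n, ∀ (u v : F), ⟪a n u, v⟫ = ⟪u, a n v⟫) :
    (∀ (u : F) (b : A), (∑' n, a n) (u <• b) = (∑' n, a n) u <• b) ∧
      (∀ u v : F, ⟪(∑' n, a n) u, v⟫ = ⟪u, (∑' n, a n) v⟫) := by
  have happ : ∀ u : F, (∑' n, a n) u = ∑' n, a n u := fun u =>
    (ContinuousLinearMap.apply ℂ F u).map_tsum hs
  have hsapp : ∀ u : F, Summable (fun n => a n u) := fun u =>
    hs.map (ContinuousLinearMap.apply ℂ F u) (ContinuousLinearMap.apply ℂ F u).continuous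
  constructor
  · intro u b
    rw [happ, happ]
    calc ∑' n, a n (u <• b) = ∑' n, rmul A b (a n u) := by
          refine tsum_congr fun n => ?_
          rw [h1 n u b, rmul_apply]
    _ = rmul A b (∑' n, a n u) := ((rmul A b).map_tsum (hsapp u)).symm
    _ = (∑' n, a n u) <• b := rfl
  · intro u v
    rw [happ, happ]
    calc ⟪∑' n, a n u, v⟫ = star ⟪v, ∑' n, a n u⟫ := (RightCStarModule.star_inner _ _).symm
      _ = star (∑' n, ⟪v, a n u⟫) := by
          congr 1
          exact ((innerRight (A := A) v).map_tsum (hsapp u) : _)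
      _ = ∑' n, star ⟪v, a n u⟫ := tsum_star
      _ = ∑' n, ⟪u, a n v⟫ := by
          refine tsum_congr fun n => ?_
          rw [RightCStarModule.star_inner, h2 n]
      _ = ∑' n, innerRight (A := A) u (a n v) := rfl
      _ = ⟪u, ∑' n, a n v⟫ := by rw [← (innerRight (A := A) u).map_tsum (hsapp v)]; rfl

end Tsum

section Sqrt
variable {F : Type*} [NormedAddCommGroup F] [NormedSpace ℂ F] [SMul Aᵐᵒᵖ F] [RightCStarModule A F]
  [CompleteSpace F]

local notation "⟪" x ", " y "⟫" => (inner A x y : A)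

theorem exists_sqrt_inv (c : F →L[ℂ] F) (hmod : ∀ (u : F) (b : A), c (u <• b) = c u <• b)
    (hsa : ∀ x y : F, ⟪c x, y⟫ = ⟪x, c y⟫) (hcpos : ∀ x : F, 0 ≤ ⟪c x, x⟫)
    {m : ℝ} (hm : 0 < m) (hlow : ∀ x : F, m * (‖x‖ * ‖x‖) ≤ ‖(⟪c x, x⟫ : A)‖) :
    ∃ r : F →L[ℂ] F, (∀ (u : F) (b : A), r (u <• b) = r u <• b) ∧
      (∀ x y : F, ⟪r x, y⟫ = ⟪x, r y⟫) ∧ Function.Bijective r ∧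
      (∀ z, c (r (r z)) = z) ∧ (∀ z, r (r (c z)) = z) ∧ (∀ z, r (c z) = c (r z)) := by
  rcases subsingleton_or_nontrivial F with hF | hF
  · exact ⟨1, fun u b => Subsingleton.elim _ _,
      fun x y => by rw [Subsingleton.elim ((1 : F →L[ℂ] F) x) x, Subsingleton.elim ((1 : F →L[ℂ] F) y) y],
      ⟨fun a b h => Subsingleton.elim a b, fun b => ⟨b, Subsingleton.elim _ _⟩⟩,
      fun z => Subsingleton.elim _ _, fun z => Subsingleton.elim _ _,
      fun z => Subsingleton.elim _ _⟩
  -- Step lemma for the approximate-point-spectrum ladder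
  have step : ∀ (l μ : ℂ) (d : ℝ), 0 < d →
      (∀ x : F, d * ‖x‖ ≤ ‖(algebraMap ℂ (F →L[ℂ] F) l - c) x‖) →
      ‖μ - l‖ < d / 2 → μ ∉ spectrum ℂ c → l ∉ spectrum ℂ c := by
    intro l μ d hd hbd hdist hμ
    rw [spectrum.notMem_iff] at hμ ⊢
    set u := hμ.unit with hu_def
    have hu : (↑u : F →L[ℂ] F) = algebraMap ℂ _ μ - c := hμ.unit_spec
    have hbdu : ∀ x : F, d / 2 * ‖x‖ ≤ ‖(↑u : F →L[ℂ] F) x‖ := by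
      intro x
      have h1 : (↑u : F →L[ℂ] F) x = (algebraMap ℂ (F →L[ℂ] F) l - c) x + (μ - l) • x := by
        rw [hu]
        simp only [ContinuousLinearMap.sub_apply, Algebra.algebraMap_eq_smul_one,
          ContinuousLinearMap.smul_apply, ContinuousLinearMap.one_apply, sub_smul]
        abel
      have h2 : ‖(algebraMap ℂ (F →L[ℂ] F) l - c) x‖ ≤ ‖(↑u : F →L[ℂ] F) x‖ + ‖μ - l‖ * ‖x‖ := by
        calc ‖(algebraMap ℂ (F →L[ℂ] F) l - c) x‖
            = ‖(↑u : F →L[ℂ] F) x - (μ - l) • x‖ := by rw [h1, add_sub_cancel_right]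
          _ ≤ ‖(↑u : F →L[ℂ] F) x‖ + ‖(μ - l) • x‖ := norm_sub_le _ _
          _ = ‖(↑u : F →L[ℂ] F) x‖ + ‖μ - l‖ * ‖x‖ := by rw [norm_smul]
      have h3 : ‖μ - l‖ * ‖x‖ ≤ d / 2 * ‖x‖ :=
        mul_le_mul_of_nonneg_right hdist.le (norm_nonneg x)
      have h4 := hbd x
      linarith
    have hinvnorm : ‖((↑u⁻¹ : F →L[ℂ] F))‖ ≤ 2 / d := by
      refine ContinuousLinearMap.opNorm_le_bound _ (by positivity) fun y => ?_
      have h3 : (↑u : F →L[ℂ] F) ((↑u⁻¹ : F →L[ℂ] F) y) = y := by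
        rw [← ContinuousLinearMap.mul_apply, u.mul_inv, ContinuousLinearMap.one_apply]
      have h5 := hbdu ((↑u⁻¹ : F →L[ℂ] F) y)
      rw [h3] at h5
      have h6 : ‖(↑u⁻¹ : F →L[ℂ] F) y‖ = (2/d) * (d/2 * ‖(↑u⁻¹ : F →L[ℂ] F) y‖) := by
        field_simp
      rw [h6]
      exact mul_le_mul_of_nonneg_left h5 (by positivity)
    have key : algebraMap ℂ (F →L[ℂ] F) l - c
        = ↑u * (1 - ↑u⁻¹ * algebraMap ℂ (F →L[ℂ] F) (μ - l)) := by
      rw [mul_sub, mul_one, ← mul_assoc, u.mul_inv, one_mul, hu, map_sub]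
      abel
    rw [key]
    refine u.isUnit.mul ?_
    have hnorm : ‖(↑u⁻¹ : F →L[ℂ] F) * algebraMap ℂ (F →L[ℂ] F) (μ - l)‖ < 1 := by
      calc ‖(↑u⁻¹ : F →L[ℂ] F) * algebraMap ℂ (F →L[ℂ] F) (μ - l)‖
          ≤ ‖(↑u⁻¹ : F →L[ℂ] F)‖ * ‖algebraMap ℂ (F →L[ℂ] F) (μ - l)‖ := norm_mul_le _ _
        _ = ‖(↑u⁻¹ : F →L[ℂ] F)‖ * ‖μ - l‖ := by rw [norm_algebraMap']
        _ ≤ (2 / d) * ‖μ - l‖ := by gcongr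
        _ < (2 / d) * (d / 2) := by
            exact mul_lt_mul_of_pos_left hdist (by positivity)
        _ = 1 := by field_simp
    simpa using (Units.oneSub _ hnorm).isUnit
  -- dividing by the norm
  have hdivide : ∀ (d : ℝ) (T : F →L[ℂ] F), 0 ≤ d →
      (∀ x : F, d * (‖x‖ * ‖x‖) ≤ ‖(⟪T x, x⟫ : A)‖) → ∀ x : F, d * ‖x‖ ≤ ‖T x‖ := by
    intro d T hd hT x
    rcases eq_or_ne x 0 with rfl | hx
    · simp
    · have h1 := (hT x).trans (RightCStarModule.norm_inner_le F)
      rw [← mul_assoc] at h1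
      exact le_of_mul_le_mul_right h1 (norm_pos_iff.mpr hx)
  -- inner A product computation
  have hinner : ∀ (l : ℂ) (x : F), (⟪(algebraMap ℂ (F →L[ℂ] F) l - c) x, x⟫ : A)
      = star l • ⟪x, x⟫ - ⟪c x, x⟫ := by
    intro l x
    rw [ContinuousLinearMap.sub_apply, RightCStarModule.inner_sub_left,
      Algebra.algebraMap_eq_smul_one, ContinuousLinearMap.smul_apply,
      ContinuousLinearMap.one_apply, RightCStarModule.inner_smul_left_complex]
  -- lower bound for non-real λ
  have hbd_im : ∀ (l : ℂ) (x : F), |l.im| * ‖x‖ ≤ ‖(algebraMap ℂ (F →L[ℂ] F) l - c) x‖ := by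
    intro l
    refine hdivide _ _ (abs_nonneg _) fun x => ?_
    rw [hinner]
    set h := (⟪x, x⟫ : A) with hh_def
    set p := (⟪c x, x⟫ : A) with hp_def
    have hh : star h = h := RightCStarModule.star_inner x x
    have hp : star p = p := by rw [hp_def, RightCStarModule.star_inner, hsa]
    set a := star l • h - p with ha_def
    have h1 : star a - a = (l - star l) • h := by
      rw [ha_def, star_sub, star_smul, star_star, hh, hp, sub_sub_sub_cancel_right, sub_smul]
    have h2 : ‖(l - star l) • h‖ = (2 * |l.im|) * ‖h‖ := by
      rw [norm_smul]
      congr 1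
      rw [Complex.star_def, Complex.sub_conj]
      simp [norm_smul, Complex.norm_real]
    have h3 : ‖star a - a‖ ≤ 2 * ‖a‖ := by
      calc ‖star a - a‖ ≤ ‖star a‖ + ‖a‖ := norm_sub_le _ _
        _ = 2 * ‖a‖ := by rw [norm_star]; ring
    have h4 : ‖h‖ = ‖x‖ * ‖x‖ := by
      rw [hh_def, ← RightCStarModule.norm_sq_eq A, sq]
    have h5 : ‖star a - a‖ = 2 * |l.im| * ‖h‖ := by rw [h1, h2]
    rw [← h4]
    linarith
  -- lower bound for real λ below m
  have hbd_re : ∀ (t : ℝ), max t 0 ≤ m →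
      ∀ x : F, (m - max t 0) * ‖x‖ ≤ ‖(algebraMap ℂ (F →L[ℂ] F) ((t : ℝ) : ℂ) - c) x‖ := by
    intro t ht
    refine hdivide _ _ (by linarith) fun x => ?_
    rw [hinner]
    set h := (⟪x, x⟫ : A) with hh_def
    set p := (⟪c x, x⟫ : A) with hp_def
    have hsmul : star ((t : ℝ) : ℂ) • h = t • h := by
      rw [Complex.star_def, Complex.conj_ofReal]
      rw [show ((t:ℝ):ℂ) = algebraMap ℝ ℂ t from rfl, algebraMap_smul]
    rw [hsmul]
    have h4 : ‖h‖ = ‖x‖ * ‖x‖ := by rw [hh_def, ← RightCStarModule.norm_sq_eq A, sq]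
    have hlx : m * (‖x‖ * ‖x‖) ≤ ‖p‖ := hlow x
    rcases le_or_gt t 0 with ht0 | ht0
    · -- t ≤ 0 : ‖t•h - p‖ = ‖p + (-t)•h‖ ≥ ‖p‖
      have hmax : max t 0 = 0 := max_eq_right ht0
      have hq : (0:A) ≤ (-t) • h := by
        have := RightCStarModule.inner_self_nonneg (A := A) (x := Real.sqrt (-t) • x)
        rwa [RightCStarModule.inner_smul_left_real, RightCStarModule.inner_smul_right_real, smul_smul,
          Real.mul_self_sqrt (by linarith)] at this
      have h5 : ‖p‖ ≤ ‖p + (-t) • h‖ :=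
        CStarAlgebra.norm_le_norm_of_nonneg_of_le (hcpos x) (le_add_of_nonneg_right hq)
      have h6 : t • h - p = -(p + (-t) • h) := by rw [neg_smul]; abel
      rw [h6, norm_neg, hmax, sub_zero]
      linarith
    · -- 0 < t : ‖t•h - p‖ ≥ ‖p‖ - t‖h‖
      have hmax : max t 0 = t := max_eq_left ht0.le
      have h5 : ‖p‖ - ‖t • h‖ ≤ ‖t • h - p‖ := by
        rw [norm_sub_rev]
        exact norm_sub_norm_le _ _
      have h6 : ‖t • h‖ = t * (‖x‖ * ‖x‖) := by
        rw [norm_smul, Real.norm_of_nonneg ht0.le, h4]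
      rw [hmax]
      nlinarith [norm_nonneg (t • h - p)]
  -- the spectrum is real and bounded below by m
  have hb1 : ∀ l ∈ spectrum ℂ c, ‖l‖ ≤ ‖c‖ := by
    intro l hl
    have := spectrum.subset_closedBall_norm (𝕜 := ℂ) c hl
    simpa [Metric.mem_closedBall, dist_zero_right] using this
  have him : ∀ l ∈ spectrum ℂ c, l.im = 0 := by
    intro l hl
    by_contra hb
    have hpos' : 0 < |l.im| := abs_pos.mpr hb
    set seq : ℕ → ℂ := fun n => l + (((n : ℝ) * (l.im / 3) : ℝ) : ℂ) * Complex.I with hseq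
    have hseqim : ∀ n : ℕ, (seq n).im = l.im * (1 + (n : ℝ)/3) := by
      intro n
      simp only [hseq, Complex.add_im, Complex.mul_im, Complex.I_re, Complex.I_im,
        Complex.ofReal_re, Complex.ofReal_im]
      ring
    have habs : ∀ n : ℕ, |l.im| * (1 + (n : ℝ)/3) ≤ |(seq n).im| := by
      intro n
      rw [hseqim, abs_mul, abs_of_nonneg (by positivity : (0:ℝ) ≤ 1 + (n : ℝ)/3)]
    have habs' : ∀ n : ℕ, |l.im| ≤ |(seq n).im| := by
      intro n
      refine le_trans ?_ (habs n)
      have hn0 : (0:ℝ) ≤ (n:ℝ) := Nat.cast_nonneg n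
      nlinarith [abs_nonneg l.im]
    have hmem : ∀ n, seq n ∈ spectrum ℂ c := by
      intro n
      induction n with
      | zero => simpa [hseq] using hl
      | succ n ih =>
        by_contra hnot
        refine (step (seq n) (seq (n+1)) |(seq n).im|
          (lt_of_lt_of_le hpos' (habs' n)) (hbd_im (seq n)) ?_ hnot) ih
        have hdiff : seq (n+1) - seq n = ((l.im / 3 : ℝ) : ℂ) * Complex.I := by
          simp only [hseq]
          push_cast
          ring
        rw [hdiff]
        rw [norm_mul, Complex.norm_I, mul_one, Complex.norm_real, Real.norm_eq_abs]
        have := habs' n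
        rw [abs_div, abs_of_nonneg (by norm_num : (0:ℝ) ≤ 3)]
        linarith
    obtain ⟨n, hn⟩ := exists_nat_gt (3 * (‖c‖ / |l.im|))
    have hc1 := hb1 _ (hmem n)
    have hc2 : |(seq n).im| ≤ ‖seq n‖ := Complex.abs_im_le_norm _
    have hc3 := habs n
    have hcc : |l.im| * (1 + (n:ℝ)/3) ≤ ‖c‖ := by linarith
    have h8 : ‖c‖ < ((n:ℝ)/3) * |l.im| := by
      rw [← div_lt_iff₀ hpos']
      linarith
    nlinarith [abs_nonneg l.im]
  have hre : ∀ t : ℝ, ((t : ℝ) : ℂ) ∈ spectrum ℂ c → m ≤ t := by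
    intro t hl
    by_contra hb
    push_neg at hb
    set d0 := m - max t 0 with hd0
    have hd0pos : 0 < d0 := by
      rcases le_or_gt t 0 with h | h
      · rw [hd0, max_eq_right h]; linarith
      · rw [hd0, max_eq_left h.le]; linarith
    set seqr : ℕ → ℝ := fun n => t - n * (d0 / 3) with hseqr
    have hseqle : ∀ n : ℕ, seqr n ≤ t := by
      intro n
      rw [hseqr]
      have : (0:ℝ) ≤ n * (d0/3) := by positivity
      simp only
      linarith
    have hdn : ∀ n : ℕ, d0 ≤ m - max (seqr n) 0 := by
      intro n
      rw [hd0]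
      have := max_le_max_right (c := (0:ℝ)) (hseqle n)
      linarith [max_le_max_right (c := (0:ℝ)) (hseqle n)]
    have hmaxle : ∀ n : ℕ, max (seqr n) 0 ≤ m := by
      intro n
      have := hdn n
      linarith
    have hmem : ∀ n, ((seqr n : ℝ) : ℂ) ∈ spectrum ℂ c := by
      intro n
      induction n with
      | zero => simpa [hseqr] using hl
      | succ n ih =>
        by_contra hnot
        refine (step _ _ (m - max (seqr n) 0) (lt_of_lt_of_le hd0pos (hdn n))
          (hbd_re (seqr n) (hmaxle n)) ?_ hnot) ih
        have hdiff : ((seqr (n+1) : ℝ) : ℂ) - ((seqr n : ℝ) : ℂ) = ((-(d0/3) : ℝ) : ℂ) := by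
          rw [← Complex.ofReal_sub]
          congr 1
          rw [hseqr]
          push_cast
          ring
        rw [hdiff, Complex.norm_real, Real.norm_eq_abs, abs_neg,
          abs_of_nonneg (by positivity : (0:ℝ) ≤ d0/3)]
        have := hdn n
        linarith
    obtain ⟨n, hn⟩ := exists_nat_gt ((‖c‖ + |t|) / (d0 / 3))
    have hc1 := hb1 _ (hmem n)
    rw [Complex.norm_real, Real.norm_eq_abs] at hc1
    have hc2 : (n : ℝ) * (d0/3) - |t| ≤ |seqr n| := by
      rw [hseqr]
      simp only
      calc (n : ℝ) * (d0/3) - |t| ≤ |(n : ℝ) * (d0/3)| - |t| :=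
            sub_le_sub_right (le_abs_self _) _
        _ ≤ |t - n * (d0/3)| := by
            rw [abs_sub_comm]
            exact abs_sub_abs_le_abs_sub _ _
    have h8 : ‖c‖ + |t| < (n:ℝ) * (d0/3) := (div_lt_iff₀ (by positivity : (0:ℝ) < d0/3)).mp hn
    linarith
  -- c is invertible
  have hcu : IsUnit c := by
    have h0 : (((0:ℝ)) : ℂ) ∉ spectrum ℂ c := fun h => absurd (hre 0 h) (by linarith)
    rw [spectrum.notMem_iff, Complex.ofReal_zero, map_zero, zero_sub] at h0
    simpa using h0.neg
  set M : ℝ := ‖c‖ + m with hM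
  have hMpos : 0 < M := add_pos_of_nonneg_of_pos (norm_nonneg c) hm
  have hMc0 : ((M:ℝ):ℂ) ≠ 0 := by exact_mod_cast hMpos.ne'
  set xB : F →L[ℂ] F := 1 - (((M:ℝ):ℂ))⁻¹ • c with hxB
  set ρ : ℝ := 1 - m / M with hρ
  have hmM : m / M ≤ 1 := by rw [div_le_one hMpos]; linarith [norm_nonneg c]
  have hmM0 : 0 < m / M := div_pos hm hMpos
  have hρ0 : 0 ≤ ρ := by rw [hρ]; linarith
  have hρ1 : ρ < 1 := by rw [hρ]; linarith
  have hxσ : ∀ μ ∈ spectrum ℂ xB, ‖μ‖ ≤ ρ := by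
    intro μ hμ
    have hlmem : (((M:ℝ):ℂ) * (1 - μ)) ∈ spectrum ℂ c := by
      by_contra hno
      rw [spectrum.notMem_iff] at hno
      have hscal : (((M:ℝ):ℂ))⁻¹ * (((M:ℝ):ℂ) * (1 - μ)) = 1 - μ := by
        field_simp
      have key : algebraMap ℂ (F →L[ℂ] F) μ - xB
          = -((((M:ℝ):ℂ))⁻¹ • (algebraMap ℂ (F →L[ℂ] F) (((M:ℝ):ℂ) * (1 - μ)) - c)) := by
        rw [hxB, Algebra.algebraMap_eq_smul_one, Algebra.algebraMap_eq_smul_one,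
          smul_sub, smul_smul, hscal, sub_smul, one_smul]
        abel
      have hkb : IsUnit ((((M:ℝ):ℂ))⁻¹
          • (algebraMap ℂ (F →L[ℂ] F) (((M:ℝ):ℂ) * (1 - μ)) - c)) := by
        rw [Algebra.smul_def]
        exact ((isUnit_iff_ne_zero.mpr (inv_ne_zero hMc0)).map
          (algebraMap ℂ (F →L[ℂ] F))).mul hno
      have hcontra : IsUnit (algebraMap ℂ (F →L[ℂ] F) μ - xB) := by
        rw [key]; exact hkb.neg
      exact (spectrum.mem_iff.mp hμ) hcontra
    have him0 := him _ hlmem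
    set l : ℂ := (((M:ℝ):ℂ)) * (1 - μ) with hl
    set t : ℝ := l.re with ht
    have hlre : l = ((t : ℝ) : ℂ) := Complex.ext rfl (by rw [Complex.ofReal_im]; exact him0)
    have hget : m ≤ t := hre t (by rw [← hlre]; exact hlmem)
    have hlet : t ≤ ‖c‖ := by
      have h1 := hb1 _ hlmem
      have h2 : t ≤ ‖l‖ := by
        calc t ≤ |t| := le_abs_self _
          _ ≤ ‖l‖ := by rw [ht]; exact Complex.abs_re_le_norm l
      linarith
    have hμval : μ = (((1 - t / M : ℝ)) : ℂ) := by
      have h1 : ((M:ℝ):ℂ) * (1 - μ) = ((t:ℝ):ℂ) := by rw [← hl, hlre]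
      have h2 : (1:ℂ) - μ = ((t:ℝ):ℂ) / ((M:ℝ):ℂ) := by
        rw [eq_div_iff hMc0, mul_comm]; exact h1
      push_cast
      linear_combination -h2
    rw [hμval, Complex.norm_real, Real.norm_eq_abs]
    have h2 : t/M ≤ 1 - m/M := by
      rw [div_le_iff₀ hMpos, sub_mul, one_mul, div_mul_cancel₀ _ hMpos.ne']
      rw [hM]; linarith
    have h3 : m/M ≤ t/M := by gcongr
    rw [abs_le]
    constructor
    · rw [hρ]; linarith
    · rw [hρ]; linarith
  have hsr : spectralRadius ℂ xB ≤ ENNReal.ofReal ρ := by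
    show (⨆ k ∈ spectrum ℂ xB, (‖k‖₊ : ℝ≥0∞)) ≤ ENNReal.ofReal ρ
    refine iSup₂_le fun k hk => ?_
    rw [show ((‖k‖₊ : ℝ≥0∞)) = ENNReal.ofReal ‖k‖ from (ENNReal.ofReal_coe_nnreal (p := ‖k‖₊)).symm]
    exact ENNReal.ofReal_le_ofReal (hxσ k hk)
  set ρ' : ℝ := (1 + ρ)/2 with hρ'
  have hρ'0 : 0 ≤ ρ' := by rw [hρ']; linarith
  have hρ'1 : ρ' < 1 := by rw [hρ']; linarith
  have hρρ' : ρ < ρ' := by rw [hρ']; linarith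
  have hev : ∀ᶠ n : ℕ in Filter.atTop, ‖xB ^ n‖ ^ (1/(n:ℝ)) < ρ' := by
    have hlim := spectrum.pow_norm_pow_one_div_tendsto_nhds_spectralRadius xB
    have hlt : spectralRadius ℂ xB < ENNReal.ofReal ρ' :=
      lt_of_le_of_lt hsr ((ENNReal.ofReal_lt_ofReal_iff (by linarith)).mpr hρρ')
    filter_upwards [hlim.eventually_lt_const hlt] with n hn
    exact (ENNReal.ofReal_lt_ofReal_iff_of_nonneg (by positivity)).mp hn
  obtain ⟨N, hN⟩ := Filter.eventually_atTop.mp hev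
  have hgeom : ∀ n, N + 1 ≤ n → ‖xB ^ n‖ ≤ ρ' ^ n := by
    intro n hn
    have h1 := hN n (by omega)
    have hn0 : ((n:ℕ):ℝ) ≠ 0 := Nat.cast_ne_zero.mpr (by omega)
    have h2 : (‖xB^n‖ ^ (1/(n:ℝ))) ^ ((n:ℕ):ℝ) ≤ ρ' ^ ((n:ℕ):ℝ) :=
      Real.rpow_le_rpow (Real.rpow_nonneg (norm_nonneg _) _) h1.le (Nat.cast_nonneg n)
    rw [← Real.rpow_mul (norm_nonneg _), one_div_mul_cancel hn0, Real.rpow_one,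
      Real.rpow_natCast] at h2
    exact h2
  set av : ℕ → F →L[ℂ] F := fun n => ((sqrtCoeff n : ℝ) : ℂ) • xB ^ n with hav
  have hnorm_av : ∀ n, ‖av n‖ ≤ ‖xB ^ n‖ := by
    intro n
    simp only [hav]
    rw [norm_smul ((sqrtCoeff n : ℝ) : ℂ) (xB ^ n), Complex.norm_real, Real.norm_eq_abs]
    exact mul_le_of_le_one_left (norm_nonneg _) (abs_sqrtCoeff_le n)
  have hsumnorm : Summable (fun n => ‖av n‖) := by
    rw [← summable_nat_add_iff (N+1)]
    refine Summable.of_nonneg_of_le (f := fun n => ρ' ^ (n + (N+1))) (fun n => norm_nonneg _) (fun n => ?_) ?_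
    · exact (hnorm_av _).trans (hgeom _ (by omega))
    · simp only [pow_add]
      exact (summable_geometric_of_lt_one hρ'0 hρ'1).mul_right _
  have hsum : Summable av := Summable.of_norm hsumnorm
  -- the series g and its properties
  have hg2' : (∑' n, av n) * (∑' n, av n) = 1 - xB := by
    rw [tsum_mul_tsum_eq_tsum_sum_antidiagonal_of_summable_norm hsumnorm hsumnorm]
    calc ∑' n, ∑ kl ∈ Finset.HasAntidiagonal.antidiagonal n, av kl.1 * av kl.2
        = ∑' n, (((if n = 0 then (1:ℝ) else if n = 1 then -1 else 0) : ℝ) : ℂ) • xB ^ n := by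
          refine tsum_congr fun n => ?_
          have hterm : ∑ kl ∈ Finset.HasAntidiagonal.antidiagonal n, av kl.1 * av kl.2
              = ((∑ kl ∈ Finset.HasAntidiagonal.antidiagonal n, sqrtCoeff kl.1 * sqrtCoeff kl.2 : ℝ) : ℂ)
                  • xB ^ n := by
            rw [show ((∑ kl ∈ Finset.HasAntidiagonal.antidiagonal n, sqrtCoeff kl.1 * sqrtCoeff kl.2 : ℝ) : ℂ)
                = ∑ kl ∈ Finset.HasAntidiagonal.antidiagonal n, ((sqrtCoeff kl.1 * sqrtCoeff kl.2 : ℝ) : ℂ)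
                from by push_cast; rfl, Finset.sum_smul]
            refine Finset.sum_congr rfl fun kl hkl => ?_
            have hkln : kl.1 + kl.2 = n := Finset.HasAntidiagonal.mem_antidiagonal.mp hkl
            simp only [hav]
            rw [smul_mul_smul_comm, ← pow_add, hkln, ← Complex.ofReal_mul]
          rw [hterm, sqrtCoeff_conv n]
      _ = ∑ n ∈ ({0, 1} : Finset ℕ),
            (((if n = 0 then (1:ℝ) else if n = 1 then -1 else 0) : ℝ) : ℂ) • xB ^ n := by
          refine tsum_eq_sum fun b hb => ?_
          have hb0 : b ≠ 0 := by intro h; exact hb (by simp [h])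
          have hb1' : b ≠ 1 := by intro h; exact hb (by simp [h])
          rw [if_neg hb0, if_neg hb1']
          simp
      _ = 1 - xB := by
          rw [Finset.sum_pair (by norm_num : (0:ℕ) ≠ 1)]
          simp [sub_eq_add_neg]
  have hcx : Commute c xB := by
    rw [hxB]
    exact (Commute.one_right c).sub_right ((Commute.refl c).smul_right _)
  have hcg' : c * (∑' n, av n) = (∑' n, av n) * c := by
    calc c * ∑' n, av n = ∑' n, c * av n := (hsum.tsum_mul_left c).symm
      _ = ∑' n, av n * c := by
          refine tsum_congr fun n => ?_
          simp only [hav]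
          rw [mul_smul_comm, smul_mul_assoc, (hcx.pow_right n).eq]
      _ = (∑' n, av n) * c := hsum.tsum_mul_right c
  have hx_mod : ∀ (u : F) (b : A), xB (u <• b) = xB u <• b := by
    intro u b
    rw [hxB]
    simp only [ContinuousLinearMap.sub_apply, ContinuousLinearMap.one_apply,
      ContinuousLinearMap.smul_apply]
    rw [hmod, ← op_smul_csmul, ← op_smul_sub]
  have hxn_mod : ∀ n, ∀ (u : F) (b : A), (xB ^ n) (u <• b) = (xB ^ n) u <• b := by
    intro n
    induction n with
    | zero => intro u b; simp
    | succ n ih =>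
      intro u b
      rw [pow_succ', ContinuousLinearMap.mul_apply, ContinuousLinearMap.mul_apply, ih, hx_mod]
  have hstarM : star ((((M:ℝ):ℂ))⁻¹) = (((M:ℝ):ℂ))⁻¹ := by
    rw [← Complex.ofReal_inv, Complex.star_def, Complex.conj_ofReal]
  have hx_sa : ∀ u v : F, (inner A (xB u) v : A) = inner A u (xB v) := by
    intro u v
    rw [hxB]
    simp only [ContinuousLinearMap.sub_apply, ContinuousLinearMap.one_apply,
      ContinuousLinearMap.smul_apply]
    rw [RightCStarModule.inner_sub_left, RightCStarModule.inner_sub_right,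
      RightCStarModule.inner_smul_left_complex, RightCStarModule.inner_smul_right_complex, hsa, hstarM]
  have hxn_sa : ∀ n, ∀ u v : F, (inner A ((xB ^ n) u) v : A) = inner A u ((xB ^ n) v) := by
    intro n
    induction n with
    | zero => intro u v; simp
    | succ n ih =>
      intro u v
      rw [pow_succ', ContinuousLinearMap.mul_apply, ContinuousLinearMap.mul_apply, hx_sa, ih]
      congr 1
      rw [← ContinuousLinearMap.mul_apply, ← ContinuousLinearMap.mul_apply,
        ((Commute.refl xB).pow_left n).eq]
  have hav_mod : ∀ n, ∀ (u : F) (b : A), av n (u <• b) = av n u <• b := by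
    intro n u b
    simp only [hav, ContinuousLinearMap.smul_apply]
    rw [hxn_mod, op_smul_csmul]
  have hav_sa : ∀ n, ∀ u v : F, (inner A (av n u) v : A) = inner A u (av n v) := by
    intro n u v
    simp only [hav, ContinuousLinearMap.smul_apply]
    rw [RightCStarModule.inner_smul_left_complex, RightCStarModule.inner_smul_right_complex, hxn_sa,
      Complex.star_def, Complex.conj_ofReal]
  obtain ⟨hg_mod, hg_sa⟩ := tsum_props av hsum hav_mod hav_sa
  set g : F →L[ℂ] F := ∑' n, av n with hg
  have hg2 : g * g = 1 - xB := hg2'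
  have hgmod2 : ∀ (u : F) (b : A), g (u <• b) = g u <• b := hg_mod
  have hgsa2 : ∀ u v : F, (inner A (g u) v : A) = inner A u (g v) := hg_sa
  have h1mx : (1 : F →L[ℂ] F) - xB = (((M:ℝ):ℂ))⁻¹ • c := by rw [hxB, sub_sub_cancel]
  -- T0 = c⁻¹
  set cu := hcu.unit with hcu_def
  have hcu_spec : (↑cu : F →L[ℂ] F) = c := hcu.unit_spec
  set T0 : F →L[ℂ] F := ↑cu⁻¹ with hT0
  have hT0c : T0 * c = 1 := by rw [hT0, ← hcu_spec]; exact cu.inv_mul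
  have hcT0 : c * T0 = 1 := by rw [hT0, ← hcu_spec]; exact cu.mul_inv
  have hT0c' : ∀ z, T0 (c z) = z := fun z => by
    rw [← ContinuousLinearMap.mul_apply, hT0c, ContinuousLinearMap.one_apply]
  have hcT0' : ∀ z, c (T0 z) = z := fun z => by
    rw [← ContinuousLinearMap.mul_apply, hcT0, ContinuousLinearMap.one_apply]
  have hcinj : Function.Injective c := fun z w h => by
    have := congrArg T0 h
    rwa [hT0c', hT0c'] at this
  have hT0_mod : ∀ (u : F) (b : A), T0 (u <• b) = T0 u <• b := by
    intro u b
    apply hcinj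
    rw [hcT0', hmod, hcT0']
  have hT0_sa : ∀ u v : F, (inner A (T0 u) v : A) = inner A u (T0 v) := by
    intro u v
    calc (inner A (T0 u) v : A) = inner A (T0 u) (c (T0 v)) := by rw [hcT0']
      _ = inner A (c (T0 u)) (T0 v) := (hsa _ _).symm
      _ = inner A u (T0 v) := by rw [hcT0']
  have hcg : Commute c g := hcg'
  have hT0g : Commute T0 g := by
    have h1 : Commute (↑cu : F →L[ℂ] F) g := by rw [hcu_spec]; exact hcg
    exact h1.units_inv_left
  -- the square root r
  set k : ℂ := ((Real.sqrt M : ℝ) : ℂ) with hk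
  have hk2 : k * k = ((M:ℝ):ℂ) := by
    rw [hk, ← Complex.ofReal_mul, Real.mul_self_sqrt hMpos.le]
  have hkne : k ≠ 0 := by
    rw [hk]
    exact_mod_cast (Real.sqrt_pos.mpr hMpos).ne'
  set r : F →L[ℂ] F := k • (T0 * g) with hr
  have hrr : r * r = T0 := by
    rw [hr, smul_mul_smul_comm, hk2]
    have h1 : (T0 * g) * (T0 * g) = T0 * (T0 * (g * g)) := by
      rw [mul_assoc T0 g (T0 * g), ← mul_assoc g T0 g,
        show g * T0 = T0 * g from hT0g.eq.symm, mul_assoc T0 g g]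
    rw [h1, hg2, h1mx]
    rw [mul_smul_comm, hT0c, mul_smul_comm, mul_one, smul_smul, mul_inv_cancel₀ hMc0, one_smul]
  have hgu : IsUnit g := by
    refine isUnit_iff_exists.mpr ⟨((M:ℝ):ℂ) • (T0 * g), ?_, ?_⟩
    · have h1 : g * (T0 * g) = T0 * (g * g) := by
        rw [← mul_assoc, show g * T0 = T0 * g from hT0g.eq.symm, mul_assoc]
      rw [mul_smul_comm, h1, hg2, h1mx, mul_smul_comm, hT0c, smul_smul,
        mul_inv_cancel₀ hMc0, one_smul]
    · have h1 : (T0 * g) * g = T0 * (g * g) := mul_assoc _ _ _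
      rw [smul_mul_assoc, h1, hg2, h1mx, mul_smul_comm, hT0c, smul_smul,
        mul_inv_cancel₀ hMc0, one_smul]
  have hT0u : IsUnit T0 := cu⁻¹.isUnit
  have hru : IsUnit r := by
    rw [hr, Algebra.smul_def]
    exact ((isUnit_iff_ne_zero.mpr hkne).map (algebraMap ℂ (F →L[ℂ] F))).mul (hT0u.mul hgu)
  have hinvmul : (↑hru.unit⁻¹ : F →L[ℂ] F) * r = 1 := by
    have h := hru.unit.inv_mul
    rwa [hru.unit_spec] at h
  have hmulinv : r * (↑hru.unit⁻¹ : F →L[ℂ] F) = 1 := by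
    have h := hru.unit.mul_inv
    rwa [hru.unit_spec] at h
  have hrinv1 : ∀ z, (↑hru.unit⁻¹ : F →L[ℂ] F) (r z) = z := by
    intro z
    calc (↑hru.unit⁻¹ : F →L[ℂ] F) (r z) = ((↑hru.unit⁻¹ : F →L[ℂ] F) * r) z := rfl
      _ = (1 : F →L[ℂ] F) z := by rw [hinvmul]
      _ = z := rfl
  have hrinv2 : ∀ z, r ((↑hru.unit⁻¹ : F →L[ℂ] F) z) = z := by
    intro z
    calc r ((↑hru.unit⁻¹ : F →L[ℂ] F) z) = (r * (↑hru.unit⁻¹ : F →L[ℂ] F)) z := rfl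
      _ = (1 : F →L[ℂ] F) z := by rw [hmulinv]
      _ = z := rfl
  have hrbij : Function.Bijective r :=
    ⟨Function.LeftInverse.injective hrinv1, Function.RightInverse.surjective hrinv2⟩
  have hr_mod : ∀ (u : F) (b : A), r (u <• b) = r u <• b := by
    intro u b
    rw [hr]
    simp only [ContinuousLinearMap.smul_apply, ContinuousLinearMap.mul_apply]
    rw [hgmod2, hT0_mod, op_smul_csmul]
  have hks : star k = k := by rw [hk, Complex.star_def, Complex.conj_ofReal]
  have hr_sa : ∀ u v : F, (inner A (r u) v : A) = inner A u (r v) := by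
    intro u v
    rw [hr]
    simp only [ContinuousLinearMap.smul_apply, ContinuousLinearMap.mul_apply]
    rw [RightCStarModule.inner_smul_left_complex, RightCStarModule.inner_smul_right_complex, hks]
    congr 1
    calc (inner A (T0 (g u)) v : A) = inner A (g u) (T0 v) := hT0_sa _ _
      _ = inner A u (g (T0 v)) := hgsa2 _ _
      _ = inner A u (T0 (g v)) := by
          rw [← ContinuousLinearMap.mul_apply g T0 v, ← ContinuousLinearMap.mul_apply T0 g v,
            show g * T0 = T0 * g from hT0g.eq.symm]
  have hcr2 : ∀ z, c (r (r z)) = z := by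
    intro z
    have h1 : r (r z) = T0 z := by rw [← ContinuousLinearMap.mul_apply, hrr]
    rw [h1, hcT0']
  have hr2c : ∀ z, r (r (c z)) = z := by
    intro z
    have h1 : r (r (c z)) = T0 (c z) := by rw [← ContinuousLinearMap.mul_apply, hrr]
    rw [h1, hT0c']
  have hrc : ∀ z, r (c z) = c (r z) := by
    intro z
    have h1 : r * c = c * r := by
      rw [hr, smul_mul_assoc, mul_smul_comm]
      congr 1
      calc (T0 * g) * c = T0 * (g * c) := mul_assoc _ _ _
        _ = T0 * (c * g) := by rw [show g * c = c * g from hcg.eq.symm]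
        _ = (T0 * c) * g := (mul_assoc _ _ _).symm
        _ = g := by rw [hT0c, one_mul]
        _ = (c * T0) * g := by rw [hcT0, one_mul]
        _ = c * (T0 * g) := mul_assoc _ _ _
    rw [← ContinuousLinearMap.mul_apply, h1, ContinuousLinearMap.mul_apply]
  exact ⟨r, hr_mod, hr_sa, hrbij, hcr2, hr2c, hrc⟩


end Sqrt

end LanceAux

/-- Part (1): a surjective adjointable module map `s : H₁ → H₂` admits an adjointable
right inverse `ψ` with `s ∘ ψ = id`; moreover `ψ(H₂)` is an orthogonal summand of `H₁`
unitarily equivalent to `H₂`.  Consequently (part (2)) every Hilbert `A`-module is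
`*`-projective: any adjointable `φ : H₀ → H₂` lifts through `s` to an adjointable
`χ : H₀ → H₁` with `s ∘ χ = φ`. -/
theorem stmt7 {A E₀ E₁ E₂ : Type*} [NonUnitalCStarAlgebra A] [PartialOrder A]
    [StarOrderedRing A]
    [NormedAddCommGroup E₀] [NormedSpace ℂ E₀] [SMul Aᵐᵒᵖ E₀] [RightCStarModule A E₀]
    [CompleteSpace E₀]
    [NormedAddCommGroup E₁] [NormedSpace ℂ E₁] [SMul Aᵐᵒᵖ E₁] [RightCStarModule A E₁]
    [CompleteSpace E₁]
    [NormedAddCommGroup E₂] [NormedSpace ℂ E₂] [SMul Aᵐᵒᵖ E₂] [RightCStarModule A E₂]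
    [CompleteSpace E₂]
    (s : E₁ →L[ℂ] E₂) (hs : IsModuleMap A s)
    (s' : E₂ →L[ℂ] E₁) (hs' : IsModuleMap A s') (hadj : IsAdjointPair A s s')
    (hsurj : Function.Surjective s) :
    (∃ ψ : E₂ →L[ℂ] E₁, IsModuleMap A ψ ∧
      (∃ ψ' : E₁ →L[ℂ] E₂, IsModuleMap A ψ' ∧ IsAdjointPair A ψ ψ') ∧
      (∀ x : E₂, s (ψ x) = x) ∧
      -- `ψ(H₂)` is an orthogonal summand of `H₁` ...
      (∀ z : E₁, ∃ u ∈ Set.range ψ, ∃ v : E₁, z = u + v ∧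
        ∀ w ∈ Set.range ψ, inner A w v = 0) ∧
      -- ... unitarily equivalent to `H₂`
      (∃ U : E₂ →L[ℂ] E₁, IsModuleMap A U ∧
        (∀ x y : E₂, inner A (U x) (U y) = inner A x y) ∧
        Set.range U = Set.range ψ)) ∧
    (∀ (φ : E₀ →L[ℂ] E₂), IsModuleMap A φ →
      (∃ φ' : E₂ →L[ℂ] E₀, IsModuleMap A φ' ∧ IsAdjointPair A φ φ') →
      ∃ χ : E₀ →L[ℂ] E₁, IsModuleMap A χ ∧
        (∃ χ' : E₁ →L[ℂ] E₀, IsModuleMap A χ' ∧ IsAdjointPair A χ χ') ∧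
        s.comp χ = φ) := by
  have hadj' : ∀ (y : E₂) (x : E₁), (inner A (s' y) x : A) = inner A y (s x) := by
    intro y x
    calc (inner A (s' y) x : A) = star (inner A x (s' y) : A) := (RightCStarModule.star_inner _ _).symm
      _ = star (inner A (s x) y : A) := by rw [← hadj]
      _ = inner A y (s x) := RightCStarModule.star_inner _ _
  set c : E₂ →L[ℂ] E₂ := s.comp s' with hc
  have hcapp : ∀ x, c x = s (s' x) := fun x => rfl
  have hc_mod : ∀ (u : E₂) (b : A), c (u <• b) = c u <• b := by
    intro u b
    rw [hcapp, hcapp, hs', hs]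
  have hc_sa : ∀ x y : E₂, (inner A (c x) y : A) = inner A x (c y) := by
    intro x y
    calc (inner A (c x) y : A) = inner A (s' x) (s' y) := by rw [hcapp]; exact hadj (s' x) y
      _ = star (inner A (s' y) (s' x) : A) := (RightCStarModule.star_inner _ _).symm
      _ = star (inner A (c y) x : A) := by rw [hcapp]; rw [hadj (s' y) x]
      _ = inner A x (c y) := RightCStarModule.star_inner _ _
  have hc_pos : ∀ x : E₂, 0 ≤ (inner A (c x) x : A) := by
    intro x
    rw [hcapp, hadj (s' x) x]
    exact RightCStarModule.inner_self_nonneg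
  obtain ⟨C, hC0, hC⟩ := s.exists_preimage_norm_le hsurj
  have hs'low : ∀ x : E₂, ‖x‖ ≤ C * ‖s' x‖ := by
    intro x
    rcases eq_or_ne x 0 with rfl | hx
    · simp
    · obtain ⟨z, hz1, hz2⟩ := hC x
      have h1 : ‖x‖ * ‖x‖ = ‖(inner A x x : A)‖ := by rw [← RightCStarModule.norm_sq_eq A, sq]
      have h2 : (inner A x x : A) = inner A z (s' x) := by
        have h := hadj z x
        rwa [hz1] at h
      have h3 : ‖(inner A z (s' x) : A)‖ ≤ ‖z‖ * ‖s' x‖ := RightCStarModule.norm_inner_le E₁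
      have h4 : ‖z‖ * ‖s' x‖ ≤ C * ‖x‖ * ‖s' x‖ :=
        mul_le_mul_of_nonneg_right hz2 (norm_nonneg _)
      have h5 : ‖x‖ * ‖x‖ ≤ (C * ‖s' x‖) * ‖x‖ := by
        rw [h1, h2]
        calc ‖(inner A z (s' x) : A)‖ ≤ C * ‖x‖ * ‖s' x‖ := h3.trans h4
          _ = (C * ‖s' x‖) * ‖x‖ := by ring
      exact le_of_mul_le_mul_right h5 (norm_pos_iff.mpr hx)
  set m : ℝ := 1 / (C * C) with hm_def
  have hm : 0 < m := by rw [hm_def]; positivity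
  have hlow : ∀ x : E₂, m * (‖x‖ * ‖x‖) ≤ ‖(inner A (c x) x : A)‖ := by
    intro x
    have h1 : (inner A (c x) x : A) = inner A (s' x) (s' x) := by
      rw [hcapp]; exact hadj (s' x) x
    have h2 : ‖(inner A (s' x) (s' x) : A)‖ = ‖s' x‖ * ‖s' x‖ := by
      rw [← RightCStarModule.norm_sq_eq A, sq]
    rw [h1, h2, hm_def]
    have h3 := hs'low x
    rw [div_mul_eq_mul_div, one_mul, div_le_iff₀ (by positivity)]
    nlinarith [norm_nonneg x, norm_nonneg (s' x)]
  obtain ⟨r, hr_mod, hr_sa, hrbij, hcr2, hr2c, hrc⟩ :=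
    LanceAux.exists_sqrt_inv c hc_mod hc_sa hc_pos hm hlow
  set ψ : E₂ →L[ℂ] E₁ := s'.comp (r.comp r) with hψ
  have hψapp : ∀ x, ψ x = s' (r (r x)) := fun x => rfl
  set ψ' : E₁ →L[ℂ] E₂ := (r.comp r).comp s with hψ'def
  have hψ'app : ∀ x, ψ' x = r (r (s x)) := fun x => rfl
  set U : E₂ →L[ℂ] E₁ := s'.comp r with hU
  have hUapp : ∀ x, U x = s' (r x) := fun x => rfl
  have hψ_mod : IsModuleMap A ψ := fun x a => by
    rw [hψapp, hψapp, hr_mod, hr_mod, hs']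
  have hψ'_mod : IsModuleMap A ψ' := fun x a => by
    rw [hψ'app, hψ'app, hs, hr_mod, hr_mod]
  have hψadj : IsAdjointPair A ψ ψ' := by
    intro x y
    rw [hψapp, hψ'app]
    calc (inner A (s' (r (r x))) y : A) = inner A (r (r x)) (s y) := hadj' _ _
      _ = inner A (r x) (r (s y)) := hr_sa _ _
      _ = inner A x (r (r (s y))) := hr_sa _ _
  have hsψ : ∀ x : E₂, s (ψ x) = x := by
    intro x
    rw [hψapp]
    exact hcr2 x
  have hdecomp : ∀ z : E₁, ∃ u ∈ Set.range ψ, ∃ v : E₁, z = u + v ∧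
      ∀ w ∈ Set.range ψ, (inner A w v : A) = 0 := by
    intro z
    refine ⟨ψ (s z), ⟨s z, rfl⟩, z - ψ (s z), by abel, ?_⟩
    rintro w ⟨y, rfl⟩
    have h2 : ψ' (ψ (s z)) = ψ' z := by
      rw [hψ'app, hψapp, hψ'app]
      exact hr2c (r (r (s z)))
    rw [RightCStarModule.inner_sub_right, hψadj, hψadj, h2, sub_self]
  have hU_mod : IsModuleMap A U := fun x a => by
    rw [hUapp, hUapp, hr_mod, hs']
  have hUinner : ∀ x y : E₂, (inner A (U x) (U y) : A) = inner A x y := by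
    intro x y
    rw [hUapp, hUapp]
    calc (inner A (s' (r x)) (s' (r y)) : A) = inner A (r x) (s (s' (r y))) := hadj' _ _
      _ = inner A x (r (s (s' (r y)))) := hr_sa _ _
      _ = inner A x y := by
          have h3 : r (s (s' (r y))) = y := (hrc (r y)).trans (hcr2 y)
          rw [h3]
  have hUrange : Set.range U = Set.range ψ := by
    ext w
    constructor
    · rintro ⟨x, rfl⟩
      obtain ⟨x', hx'⟩ := hrbij.2 x
      exact ⟨x', by rw [hψapp, hUapp, hx']⟩
    · rintro ⟨x, rfl⟩
      exact ⟨r x, by rw [hψapp, hUapp]⟩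
  refine ⟨⟨ψ, hψ_mod, ⟨ψ', hψ'_mod, hψadj⟩, hsψ, hdecomp, ⟨U, hU_mod, hUinner, hUrange⟩⟩, ?_⟩
  rintro φ hφ ⟨φ', hφ'm, hφadj⟩
  refine ⟨ψ.comp φ, ?_, ⟨φ'.comp ψ', ?_, ?_⟩, ?_⟩
  · intro x a
    show ψ (φ (x <• a)) = ψ (φ x) <• a
    rw [hφ x a, hψ_mod (φ x) a]
  · intro x a
    show φ' (ψ' (x <• a)) = φ' (ψ' x) <• a
    rw [hψ'_mod x a, hφ'm (ψ' x) a]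
  · intro x y
    calc (inner A ((ψ.comp φ) x) y : A) = inner A (ψ (φ x)) y := rfl
      _ = inner A (φ x) (ψ' y) := hψadj _ _
      _ = inner A x (φ' (ψ' y)) := hφadj _ _
      _ = inner A x ((φ'.comp ψ') y) := rfl
  · ext x
    simpa [ContinuousLinearMap.comp_apply] using hsψ (φ x)

end
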